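/- Let H be the 4-uniform hypergraph on vertex set V = {w, -2, -1, 0, 1, 2} whose hyperedges are exactly the sets {w, x₁, x₂, x₃} with distinct x₁, x₂, x₃ ∈ {-2,-1,0,1,2} and x₁ + x₂ + x₃ > 0. Then H is T2-threshold (via c(w) = 10, c(v) = v otherwise, and τ = 10), but H is not {0,1}-constructable. -/

import Mathlib

open Finset

/-- The vertex `w` of the hypergraph, represented by the integer `10`. -/
def w : ℤ := 10

/-- The vertex set `{w, -2, -1, 0, 1, 2}`. -/
noncomputable def V : Finset ℤ := insert w (Finset.Icc (-2) 2)

/-- The hyperedges: the sets `{w, x₁, x₂, x₃}` with distinct `x₁,x₂,x₃ ∈ {-2,…,2}`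
and `x₁ + x₂ + x₃ > 0`. -/
noncomputable def E : Finset (Finset ℤ) :=
  V.powerset.filter (fun e => e.card = 4 ∧ w ∈ e ∧ 0 < ∑ x ∈ e.erase w, x)

/-- A `k`-uniform hypergraph `(V', E')` is `{0,1}`-constructable if its vertices can be
added one by one (an enumeration `f` together with bits `b`), where a bit `true` at step `j`
means vertex `f j` is dominating, such that the hyperedges are exactly the `k`-subsets of
vertices whose last-added vertex is dominating. -/
def ZeroOneConstructable (k : ℕ) (V' : Finset ℤ) (E' : Finset (Finset ℤ)) : Prop :=
  ∃ (f : ℕ → ℤ) (b : ℕ → Bool),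
    Set.InjOn f (Set.Iio V'.card) ∧
    (Finset.range V'.card).image f = V' ∧
    ∀ e : Finset ℤ, e ∈ E' ↔
      (e ⊆ V' ∧ e.card = k ∧
        ∃ j < V'.card, b j = true ∧ f j ∈ e ∧ ∀ x ∈ e, ∀ i < V'.card, f i = x → i ≤ j)

lemma Vcard : V.card = 6 := by decide

lemma part1 : ∀ S ∈ V.powerset, S.card = 4 →
    ((∑ x ∈ S, (if x = w then (10 : ℤ) else x)) > 10 ↔ S ∈ E) := by decide

lemma nonedge : ∀ v ∈ V, ∃ e ∈ V.powerset, e.card = 4 ∧ v ∈ e ∧ e ∉ E := by decide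

lemma posdeg : ∀ v ∈ V, ∃ e ∈ E, v ∈ e := by decide

theorem stmt_18 :
    (∀ S : Finset ℤ, S ⊆ V → S.card = 4 →
      ((∑ x ∈ S, (if x = w then (10 : ℤ) else x)) > 10 ↔ S ∈ E)) ∧
    ¬ ZeroOneConstructable 4 V E := by
  constructor
  · intro S hS hc
    exact part1 S (Finset.mem_powerset.mpr hS) hc
  · rintro ⟨f, b, hinj, himg, hE⟩
    rw [Vcard] at hinj himg hE
    have hf5 : f 5 ∈ V := by
      rw [← himg]
      exact Finset.mem_image_of_mem f (by decide)
    cases hb5 : b 5 with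
    | true =>
      obtain ⟨e, hep, hec, hve, heE⟩ := nonedge (f 5) hf5
      exact heE ((hE e).mpr ⟨Finset.mem_powerset.mp hep, hec,
        5, by omega, hb5, hve, fun x hx i hi hfi => by omega⟩)
    | false =>
      obtain ⟨e, heE, hve⟩ := posdeg (f 5) hf5
      obtain ⟨-, -, j, hj, hbj, hfj, hmax⟩ := (hE e).mp heE
      have h5j : 5 ≤ j := hmax (f 5) hve 5 (by omega) rfl
      have : j = 5 := by omega
      rw [this, hb5] at hbj
      exact Bool.noConfusion hbj
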